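/- Let E be a set with element 0 and Z : E⁴ → ℝ with Z(0,0,0,0) = 0. Define H_n(a₁,…,aₙ) = ∑_{j=1}^{n-3} Z(a_j,a_{j+1},a_{j+2},a_{j+3}) + Z(a_{n-2},a_{n-1},a_n,0) + Z(a_{n-1},a_n,0,0) + Z(a_n,0,0,0) for n ≥ 3 (the sum being empty for n = 3). Suppose Master_7(a₁,…,a₇) = 0 for all a₁,…,a₇ ∈ E (where Master_7 is as in the earlier definition). Then H_n(a₁,…,aₙ) = H_{n-1}(a₁,…,a_{n-1}) for all n ≥ 4, hence H_n(a₁,…,aₙ) = H_3(a₁,a₂,a₃) depends only on the first three letters. -/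

import Mathlib

/-- `Master_7` built from `Z`. -/
def master7 {E : Type*} (Z : E → E → E → E → ℝ)
    (a1 a2 a3 a4 a5 a6 a7 : E) : ℝ :=
  Z a1 a2 a3 a4 + Z a2 a3 a4 a5 + Z a3 a4 a5 a6 + Z a4 a5 a6 a7
    - Z a1 a2 a3 a5 - Z a2 a3 a5 a6 - Z a3 a5 a6 a7

/-- The auxiliary quantity `H_n` (word indexed from `0`, padded with the
distinguished element `e`). -/
def Haux {E : Type*} (e : E) (Z : E → E → E → E → ℝ) (n : ℕ) (a : ℕ → E) : ℝ :=
  (∑ j ∈ Finset.range (n - 3), Z (a j) (a (j+1)) (a (j+2)) (a (j+3)))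
    + Z (a (n-3)) (a (n-2)) (a (n-1)) e
    + Z (a (n-2)) (a (n-1)) e e
    + Z (a (n-1)) e e e

/-- If `Z(0,0,0,0) = 0` and `Master_7 ≡ 0`, then `H_n = H_{n-1}` for `n ≥ 4`,
hence `H_n = H_3` depends only on the first three letters. -/
theorem stmt18 {E : Type*} (e : E) (Z : E → E → E → E → ℝ)
    (hZ0 : Z e e e e = 0)
    (hM : ∀ a1 a2 a3 a4 a5 a6 a7 : E, master7 Z a1 a2 a3 a4 a5 a6 a7 = 0) :
    (∀ n : ℕ, 4 ≤ n → ∀ a : ℕ → E, Haux e Z n a = Haux e Z (n-1) a)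
    ∧ (∀ n : ℕ, 3 ≤ n → ∀ a : ℕ → E, Haux e Z n a = Haux e Z 3 a) := by
  have step : ∀ m : ℕ, ∀ a : ℕ → E, Haux e Z (m+4) a = Haux e Z (m+3) a := by
    intro m a
    have key := hM (a m) (a (m+1)) (a (m+2)) (a (m+3)) e e e
    unfold master7 at key
    simp only [Haux, show m+4-3 = m+1 from rfl, show m+4-2 = m+2 from rfl,
      show m+4-1 = m+3 from rfl, show m+3-3 = m from rfl,
      show m+3-2 = m+1 from rfl, show m+3-1 = m+2 from rfl,
      Finset.sum_range_succ]
    linarith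
  have first : ∀ n : ℕ, 4 ≤ n → ∀ a : ℕ → E, Haux e Z n a = Haux e Z (n-1) a := by
    intro n hn a
    obtain ⟨m, rfl⟩ := Nat.exists_eq_add_of_le hn
    have : 4 + m - 1 = m + 3 := by omega
    rw [this, show 4 + m = m + 4 by omega]
    exact step m a
  refine ⟨first, ?_⟩
  intro n hn a
  induction n with
  | zero => omega
  | succ k ih =>
    rcases Nat.lt_or_ge k 3 with h | h
    · have : k = 2 := by omega
      subst this; rfl
    · have h4 : 4 ≤ k + 1 := by omega
      have := first (k+1) h4 a
      simp only [Nat.add_sub_cancel] at this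
      rw [this, ih h]
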